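/- arXiv:0907.0014 — 2 statements merged into one kernel-verified Lean document; each statement's English description precedes it below -/
import Mathlib

section
/- For every integer M ≥ 3 and every n ∈ ℤ, the ratio (f_M(n+1) − f_M(n))² / (f_M(n+1) + f_M(n)) (interpreted as 0 when the denominator is 0, with the difference and ratio taken in ℝ) is at most (M − 1)! · (N_K + 1)^{M−3}. -/
/-- The number of `M`-tuples `(n_1, …, n_M)` with each `n_i ∈ {0, …, NK}`
and `n_1 + ⋯ + n_M = n`. -/
def f (NK M : ℕ) (n : ℤ) : ℕ :=
  (Finset.univ.filter
    (fun t : Fin M → Fin (NK + 1) => (∑ i, ((t i : ℕ) : ℤ)) = n)).card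

lemma frec (NK M : ℕ) (n : ℤ) :
    f NK (M + 1) n = ∑ k ∈ Finset.range (NK + 1), f NK M (n - k) := by
  unfold f
  rw [Finset.card_eq_sum_card_fiberwise
    (f := fun t : Fin (M+1) → Fin (NK+1) => (t 0 : ℕ))
    (t := Finset.range (NK + 1)) (fun t _ => Finset.mem_range.2 (t 0).isLt)]
  refine Finset.sum_congr rfl fun k hk => ?_
  have hkN : k < NK + 1 := Finset.mem_range.1 hk
  refine Finset.card_bij' (fun t _ => Fin.tail t)
    (fun g _ => Fin.cons ⟨k, hkN⟩ g) ?_ ?_ ?_ ?_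
  · intro t ht
    simp only [Finset.mem_filter, Finset.mem_univ, true_and] at ht ⊢
    obtain ⟨hsum, h0⟩ := ht
    rw [Fin.sum_univ_succ] at hsum
    have : ∑ i : Fin M, ((Fin.tail t i : ℕ) : ℤ) = n - (t 0 : ℕ) := by
      simp only [Fin.tail]; omega
    rw [this, h0]
  · intro g hg
    simp only [Finset.mem_filter, Finset.mem_univ, true_and] at hg ⊢
    constructor
    · rw [Fin.sum_univ_succ]
      simp only [Fin.cons_zero, Fin.cons_succ]
      rw [hg]; push_cast; ring
    · simp
  · intro t ht
    simp only [Finset.mem_filter, Finset.mem_univ, true_and] at ht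
    have : t 0 = ⟨k, hkN⟩ := Fin.ext ht.2
    simp only [← this]
    exact Fin.cons_self_tail t
  · intro g _
    simp [Fin.tail_cons]

lemma f1_le_one (NK : ℕ) (n : ℤ) : f NK 1 n ≤ 1 := by
  unfold f
  refine Finset.card_le_one.2 fun t ht s hs => ?_
  simp only [Finset.mem_filter, Finset.mem_univ, true_and, Fin.sum_univ_one] at ht hs
  funext i
  have : i = 0 := Subsingleton.elim _ _
  subst this
  exact Fin.ext (by exact_mod_cast ht.trans hs.symm)

/-- telescoping step: difference of consecutive values. -/
lemma fstep (NK M : ℕ) (n : ℤ) :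
    (f NK (M + 1) (n + 1) : ℤ) - f NK (M + 1) n
      = (f NK M (n + 1) : ℤ) - f NK M (n - NK) := by
  have h1 := frec NK M (n + 1)
  have h2 := frec NK M n
  have key : ∀ m : ℤ, (∑ k ∈ Finset.range (NK + 1), (f NK M (m + 1 - k) : ℤ))
      - ∑ k ∈ Finset.range (NK + 1), (f NK M (m - k) : ℤ)
      = (f NK M (m + 1) : ℤ) - f NK M (m - NK) := by
    intro m
    rw [← Finset.sum_sub_distrib]
    have : ∀ k ∈ Finset.range (NK + 1),
        (f NK M (m + 1 - k) : ℤ) - f NK M (m - k)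
        = (fun i : ℕ => (f NK M (m + 1 - i) : ℤ)) k
          - (fun i : ℕ => (f NK M (m + 1 - i) : ℤ)) (k + 1) := by
      intro k _
      simp only []
      congr 2
      push_cast; ring
    rw [Finset.sum_congr rfl this, Finset.sum_range_sub']
    congr 2 <;> push_cast <;> ring
  have := key n
  push_cast [h1, h2]
  push_cast [h1, h2] at this
  linarith [this]

lemma f2_step_le (NK : ℕ) (m : ℤ) :
    (f NK 2 (m + 1) : ℤ) - f NK 2 m ≤ 1 ∧ (-1 : ℤ) ≤ (f NK 2 (m + 1) : ℤ) - f NK 2 m := by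
  have h := fstep NK 1 m
  have h1 := f1_le_one NK (m + 1)
  have h2 := f1_le_one NK (m - NK)
  have h3 : (0 : ℤ) ≤ f NK 1 (m + 1) := Int.natCast_nonneg _
  have h4 : (0 : ℤ) ≤ f NK 1 (m - NK) := Int.natCast_nonneg _
  constructor <;> [skip; skip] <;>
    · rw [h]
      omega

lemma f2_lower_down (NK : ℕ) (m : ℤ) : ∀ t : ℕ, (f NK 2 m : ℤ) - t ≤ f NK 2 (m - t) := by
  intro t
  induction t with
  | zero => simp
  | succ t ih =>
    have h := (f2_step_le NK (m - (t + 1))).1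
    have : m - (t + 1) + 1 = m - t := by push_cast; ring
    rw [this] at h
    push_cast
    push_cast at ih
    linarith

lemma f2_lower_up (NK : ℕ) (m : ℤ) : ∀ t : ℕ, (f NK 2 m : ℤ) - t ≤ f NK 2 (m + t) := by
  intro t
  induction t with
  | zero => simp
  | succ t ih =>
    have h := (f2_step_le NK (m + t)).2
    have : m + t + 1 = m + (t + 1 : ℕ) := by push_cast; ring
    rw [this] at h
    push_cast
    push_cast at ih h
    linarith

lemma f2_le (NK : ℕ) (m : ℤ) : f NK 2 m ≤ NK + 1 := by
  rw [show (2 : ℕ) = 1 + 1 from rfl, frec]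
  calc ∑ k ∈ Finset.range (NK + 1), f NK 1 (m - k)
      ≤ ∑ _k ∈ Finset.range (NK + 1), 1 :=
        Finset.sum_le_sum fun k _ => f1_le_one NK _
    _ = NK + 1 := by simp

lemma gauss : ∀ c : ℕ, 2 * ∑ k ∈ Finset.range c, ((c : ℤ) - k) = c * (c + 1) := by
  intro c
  induction c with
  | zero => simp
  | succ c ih =>
    rw [Finset.sum_range_succ]
    have : ∑ k ∈ Finset.range c, ((c : ℤ) + 1 - k)
        = (∑ k ∈ Finset.range c, ((c : ℤ) - k)) + c := by
      calc ∑ k ∈ Finset.range c, ((c : ℤ) + 1 - k)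
          = ∑ k ∈ Finset.range c, (((c : ℤ) - k) + 1) :=
            Finset.sum_congr rfl fun k _ => by ring
        _ = (∑ k ∈ Finset.range c, ((c : ℤ) - k)) + c := by
            rw [Finset.sum_add_distrib]; simp
    push_cast
    push_cast at this ih
    rw [this]
    linarith

lemma sum_lb (N cN : ℕ) (hc : cN ≤ N + 1) (g : ℕ → ℤ) (hg : ∀ k, 0 ≤ g k)
    (h : ∀ k, (cN : ℤ) - k ≤ g k) :
    (cN : ℤ) * (cN + 1) ≤ 2 * ∑ k ∈ Finset.range (N + 1), g k := by
  have h1 : ∑ k ∈ Finset.range cN, g k ≤ ∑ k ∈ Finset.range (N + 1), g k :=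
    Finset.sum_le_sum_of_subset_of_nonneg (Finset.range_subset_range.2 hc) fun k _ _ => hg k
  have h2 : ∑ k ∈ Finset.range cN, ((cN : ℤ) - k) ≤ ∑ k ∈ Finset.range cN, g k :=
    Finset.sum_le_sum fun k _ => h k
  have := gauss cN
  linarith

lemma base_case (NK : ℕ) (n : ℤ) :
    ((f NK 3 (n + 1) : ℤ) - f NK 3 n) ^ 2
      ≤ 2 * ((f NK 3 (n + 1) : ℤ) + f NK 3 n) := by
  have hd : (f NK 3 (n + 1) : ℤ) - f NK 3 n
      = (f NK 2 (n + 1) : ℤ) - f NK 2 (n - NK) := fstep NK 2 n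
  have ha : (0 : ℤ) ≤ f NK 3 (n + 1) := Int.natCast_nonneg _
  have hb : (0 : ℤ) ≤ f NK 3 n := Int.natCast_nonneg _
  rcases le_or_gt (f NK 2 (n - NK)) (f NK 2 (n + 1)) with hcase | hcase
  · -- d ≥ 0
    set cN := f NK 2 (n + 1) with hcN
    have key : (cN : ℤ) * (cN + 1) ≤ 2 * f NK 3 (n + 1) := by
      have hrec : f NK 3 (n + 1) = ∑ k ∈ Finset.range (NK + 1), f NK 2 (n + 1 - k) :=
        frec NK 2 (n + 1)
      have : (f NK 3 (n + 1) : ℤ) = ∑ k ∈ Finset.range (NK + 1), (f NK 2 (n + 1 - k) : ℤ) := by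
        rw [hrec]; push_cast; rfl
      rw [this]
      exact sum_lb NK cN (f2_le NK _) _ (fun k => Int.natCast_nonneg _)
        (fun k => f2_lower_down NK (n + 1) k)
    have h1 : (f NK 2 (n - NK) : ℤ) ≥ 0 := Int.natCast_nonneg _
    have h2 : ((f NK 2 (n + 1) : ℤ) - f NK 2 (n - NK)) ≤ cN := by omega
    have h3 : (0:ℤ) ≤ (f NK 2 (n + 1) : ℤ) - f NK 2 (n - NK) := by
      have := Int.ofNat_le.2 hcase
      omega
    rw [hd]
    nlinarith [Int.natCast_nonneg cN]
  · -- d < 0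
    set cN := f NK 2 (n - NK) with hcN
    have key : (cN : ℤ) * (cN + 1) ≤ 2 * f NK 3 n := by
      have hrec : f NK 3 n = ∑ k ∈ Finset.range (NK + 1), f NK 2 (n - k) :=
        frec NK 2 n
      have hrefl : ∑ k ∈ Finset.range (NK + 1), (f NK 2 (n - NK + k) : ℤ)
          = ∑ k ∈ Finset.range (NK + 1), (f NK 2 (n - k) : ℤ) := by
        rw [← Finset.sum_range_reflect]
        refine Finset.sum_congr rfl fun j hj => ?_
        have hj' : j < NK + 1 := Finset.mem_range.1 hj
        congr 2
        have : ((NK + 1 - 1 - j : ℕ) : ℤ) = (NK : ℤ) - j := by omega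
        rw [this]; ring
      have : (f NK 3 n : ℤ) = ∑ k ∈ Finset.range (NK + 1), (f NK 2 (n - NK + k) : ℤ) := by
        rw [hrec, hrefl]; push_cast; rfl
      rw [this]
      exact sum_lb NK cN (f2_le NK _) _ (fun k => Int.natCast_nonneg _)
        (fun k => f2_lower_up NK (n - NK) k)
    have h1 : (f NK 2 (n + 1) : ℤ) ≥ 0 := Int.natCast_nonneg _
    have h2 : ((f NK 2 (n - NK) : ℤ) - f NK 2 (n + 1)) ≤ cN := by omega
    have h3 : (0:ℤ) ≤ (f NK 2 (n - NK) : ℤ) - f NK 2 (n + 1) := by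
      have := Int.ofNat_le.2 (le_of_lt hcase)
      omega
    rw [hd]
    nlinarith [Int.natCast_nonneg cN]

lemma main_ineq (NK : ℕ) : ∀ M, 3 ≤ M → ∀ n : ℤ,
    ((f NK M (n + 1) : ℤ) - f NK M n) ^ 2
      ≤ 2 * ((NK : ℤ) + 1) ^ (M - 3) * ((f NK M (n + 1) : ℤ) + f NK M n) := by
  intro M hM
  induction M, hM using Nat.le_induction with
  | base => intro n; simpa using base_case NK n
  | succ M hM ih =>
    intro n
    have hdiff : (f NK (M + 1) (n + 1) : ℤ) - f NK (M + 1) n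
        = ∑ k ∈ Finset.range (NK + 1),
            ((f NK M ((n - k) + 1) : ℤ) - f NK M (n - k)) := by
      have h1 := frec NK M (n + 1)
      have h2 := frec NK M n
      rw [Finset.sum_sub_distrib]
      have e : ∀ k ∈ Finset.range (NK + 1),
          (f NK M ((n - k) + 1) : ℤ) = (f NK M (n + 1 - k) : ℤ) := by
        intro k _; congr 1; ring_nf
      rw [Finset.sum_congr rfl e, h1, h2]
      push_cast; ring
    have hsum : (f NK (M + 1) (n + 1) : ℤ) + f NK (M + 1) n
        = ∑ k ∈ Finset.range (NK + 1),
            ((f NK M ((n - k) + 1) : ℤ) + f NK M (n - k)) := by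
      have h1 := frec NK M (n + 1)
      have h2 := frec NK M n
      rw [Finset.sum_add_distrib]
      have e : ∀ k ∈ Finset.range (NK + 1),
          (f NK M ((n - k) + 1) : ℤ) = (f NK M (n + 1 - k) : ℤ) := by
        intro k _; congr 1; ring_nf
      rw [Finset.sum_congr rfl e, h1, h2]
      push_cast; ring
    have cs : (∑ k ∈ Finset.range (NK + 1),
          ((f NK M ((n - k) + 1) : ℤ) - f NK M (n - k))) ^ 2
        ≤ (NK + 1) * ∑ k ∈ Finset.range (NK + 1),
            ((f NK M ((n - k) + 1) : ℤ) - f NK M (n - k)) ^ 2 := by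
      have := sq_sum_le_card_mul_sum_sq
        (s := Finset.range (NK + 1))
        (f := fun k => (f NK M ((n - k) + 1) : ℤ) - f NK M (n - k))
      simpa using this
    have hterm : ∑ k ∈ Finset.range (NK + 1),
          ((f NK M ((n - k) + 1) : ℤ) - f NK M (n - k)) ^ 2
        ≤ 2 * ((NK : ℤ) + 1) ^ (M - 3) *
            ((f NK (M + 1) (n + 1) : ℤ) + f NK (M + 1) n) := by
      rw [hsum, Finset.mul_sum]
      exact Finset.sum_le_sum fun k _ => ih (n - k)
    have hpow : ((NK : ℤ) + 1) ^ (M + 1 - 3) = ((NK : ℤ) + 1) ^ (M - 3) * ((NK : ℤ) + 1) := by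
      rw [show M + 1 - 3 = (M - 3) + 1 by omega, pow_succ]
    rw [hdiff, hpow]
    calc (∑ k ∈ Finset.range (NK + 1),
          ((f NK M ((n - k) + 1) : ℤ) - f NK M (n - k))) ^ 2
        ≤ (NK + 1) * ∑ k ∈ Finset.range (NK + 1),
            ((f NK M ((n - k) + 1) : ℤ) - f NK M (n - k)) ^ 2 := cs
      _ ≤ (NK + 1) * (2 * ((NK : ℤ) + 1) ^ (M - 3) *
            ((f NK (M + 1) (n + 1) : ℤ) + f NK (M + 1) n)) := by
          have hnk : (0:ℤ) ≤ (NK : ℤ) + 1 := by positivity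
          exact mul_le_mul_of_nonneg_left hterm hnk
      _ = 2 * (((NK : ℤ) + 1) ^ (M - 3) * ((NK : ℤ) + 1)) *
            ((f NK (M + 1) (n + 1) : ℤ) + f NK (M + 1) n) := by ring


/-- For `M ≥ 3`, the ratio `(f_M(n+1) − f_M(n))² / (f_M(n+1) + f_M(n))` (interpreted
as 0 when the denominator vanishes) is at most `(M − 1)! · (N_K + 1)^(M−3)`. -/
theorem stmt5 (NK : ℕ) (hNK : 0 < NK) (M : ℕ) (hM : 3 ≤ M) (n : ℤ) :
    (if f NK M (n + 1) + f NK M n = 0 then (0 : ℝ)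
      else ((f NK M (n + 1) : ℝ) - (f NK M n : ℝ)) ^ 2 /
        ((f NK M (n + 1) : ℝ) + (f NK M n : ℝ)))
    ≤ (Nat.factorial (M - 1) : ℝ) * ((NK : ℝ) + 1) ^ (M - 3) := by
  have hK : (0 : ℝ) ≤ (Nat.factorial (M - 1) : ℝ) * ((NK : ℝ) + 1) ^ (M - 3) := by
    positivity
  split_ifs with h
  · exact hK
  · set A : ℝ := (f NK M (n + 1) : ℝ) with hA
    set B : ℝ := (f NK M n : ℝ) with hB
    have hAB : 0 < A + B := by
      have : 0 < f NK M (n + 1) + f NK M n := Nat.pos_of_ne_zero h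
      rw [hA, hB]
      exact_mod_cast this
    rw [div_le_iff₀ hAB]
    have hZ := main_ineq NK M hM n
    have hR : (A - B) ^ 2 ≤ 2 * ((NK : ℝ) + 1) ^ (M - 3) * (A + B) := by
      have : ((((f NK M (n + 1) : ℤ) - f NK M n) ^ 2 : ℤ) : ℝ)
          ≤ ((2 * ((NK : ℤ) + 1) ^ (M - 3) * ((f NK M (n + 1) : ℤ) + f NK M n) : ℤ) : ℝ) :=
        Int.cast_le.2 hZ
      push_cast at this
      convert this using 2 <;> push_cast <;> ring
    have hfact : (2 : ℝ) ≤ (Nat.factorial (M - 1) : ℝ) := by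
      have h2 : 2 ≤ M - 1 := by omega
      have := Nat.factorial_le h2
      have h2f : Nat.factorial 2 = 2 := rfl
      exact_mod_cast h2f ▸ this
    have hpow : (0 : ℝ) ≤ ((NK : ℝ) + 1) ^ (M - 3) := by positivity
    nlinarith [hAB.le, mul_nonneg hpow hAB.le]
end

section
/- For every integer M ≥ 1, f_M has no nontrivial minimum: for all integers a ≤ n ≤ b, one has f_M(n) ≥ min(f_M(a), f_M(b)). In other words, f_M is quasiconcave on ℤ: it is nondecreasing up to its maximum and nonincreasing thereafter. -/
/-- symmetric about `s/2` and nondecreasing on the left half. -/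
def SymUni (s : ℤ) (g : ℤ → ℕ) : Prop :=
  (∀ n, g (s - n) = g n) ∧ ∀ m n : ℤ, m ≤ n → 2*n ≤ s → g m ≤ g n

lemma SymUni.mono {s : ℤ} {g : ℤ → ℕ} (h : SymUni s g) {m n : ℤ}
    (hmn : m ≤ n) (hsum : m + n ≤ s) : g m ≤ g n := by
  rcases le_or_gt (2*n) s with hn | hn
  · exact h.2 m n hmn hn
  · have := h.2 m (s - n) (by omega) (by omega)
    rwa [h.1 n] at this

lemma f_zero (NK : ℕ) (n : ℤ) : f NK 0 n = if n = 0 then 1 else 0 := by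
  unfold f
  by_cases h : n = 0 <;> simp [h, eq_comm]

lemma f_succ (NK M : ℕ) (n : ℤ) :
    f NK (M+1) n = ∑ k ∈ Finset.range (NK+1), f NK M (n - k) := by
  classical
  rw [show f NK (M+1) n = (Finset.univ.filter
    (fun t : Fin (M+1) → Fin (NK + 1) => (∑ i, ((t i : ℕ) : ℤ)) = n)).card from rfl]
  rw [Finset.card_eq_sum_card_fiberwise (f := fun t : Fin (M+1) → Fin (NK+1) => t 0)
    (t := Finset.univ) (fun x _ => Finset.mem_univ _)]
  rw [← Fin.sum_univ_eq_sum_range (fun k => f NK M (n - k)) (NK+1)]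
  refine Finset.sum_congr rfl (fun k _ => ?_)
  refine Finset.card_nbij' (i := fun t => Fin.tail t) (j := fun u => Fin.cons k u) ?_ ?_ ?_ ?_
  · intro t ht
    simp only [Finset.mem_coe, Finset.mem_filter, Finset.mem_univ, true_and] at ht ⊢
    obtain ⟨h1, h2⟩ := ht
    rw [Fin.sum_univ_succ, h2] at h1
    simpa [Fin.tail] using (by omega : (∑ i : Fin M, ((t i.succ : ℕ) : ℤ)) = n - k)
  · intro u hu
    simp only [Finset.mem_coe, Finset.mem_filter, Finset.mem_univ, true_and] at hu ⊢
    refine ⟨?_, rfl⟩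
    rw [Fin.sum_univ_succ]
    simp only [Fin.cons_zero, Fin.cons_succ]
    omega
  · intro t ht
    simp only [Finset.mem_coe, Finset.mem_filter, Finset.mem_univ, true_and] at ht
    rw [← ht.2]
    exact Fin.cons_self_tail t
  · intro u _
    simp [Fin.tail_cons]

lemma symUni_window {s : ℤ} {g : ℤ → ℕ} (hg : SymUni s g) (hs : 0 ≤ s) (K : ℕ) :
    SymUni (s + K) (fun n => ∑ k ∈ Finset.range (K+1), g (n - k)) := by
  constructor
  · intro n
    simp only
    have h1 : ∀ k ∈ Finset.range (K+1), g (s + K - n - k) = g (n - K + k) := by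
      intro k hk
      have := hg.1 (n - K + k)
      rw [← this]; ring_nf
    rw [Finset.sum_congr rfl h1]
    rw [← Finset.sum_range_reflect (fun k => g (n - k)) (K+1)]
    refine Finset.sum_congr rfl (fun k hk => ?_)
    simp only [Finset.mem_range] at hk
    congr 1
    have : ((K + 1 - 1 - k : ℕ) : ℤ) = K - k := by omega
    rw [this]; ring
  · -- first a single step
    have step : ∀ n : ℤ, 2*n + 1 ≤ s + K →
        (∑ k ∈ Finset.range (K+1), g (n - k)) ≤ ∑ k ∈ Finset.range (K+1), g (n + 1 - k) := by
      intro n hn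
      rw [Finset.sum_range_succ' (fun k => g (n + 1 - k)) K]
      rw [Finset.sum_range_succ (fun k => g (n - k)) K]
      have e : ∀ k, g (n + 1 - ((k : ℤ) + 1)) = g (n - k) := by intro k; ring_nf
      simp only [Nat.cast_add, Nat.cast_one, e, Nat.cast_zero, sub_zero]
      gcongr ?_ + ?_
      · exact le_rfl
      · exact hg.mono (by omega) (by omega)
    intro m n hmn
    simp only
    refine Int.le_induction (motive := fun n _ => 2*n ≤ s + K →
        (∑ k ∈ Finset.range (K+1), g (m - k)) ≤ ∑ k ∈ Finset.range (K+1), g (n - k)) ?_ ?_ n hmn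
    · intro _; exact le_rfl
    · intro n hn' ih hn
      exact le_trans (ih (by omega)) (step n (by omega))

lemma f_symUni (NK M : ℕ) : SymUni ((M : ℤ) * NK) (f NK M) := by
  induction M with
  | zero =>
    constructor
    · intro n; simp only [Nat.cast_zero, zero_mul, zero_sub, f_zero]
      by_cases h : n = 0 <;> simp [h]
    · intro m n hmn hn
      simp only [Nat.cast_zero, zero_mul] at hn
      rw [f_zero, f_zero]
      by_cases hm : m = 0
      · have : n = 0 := by omega
        simp [hm, this]
      · simp [hm]
  | succ M ih =>
    have h := symUni_window ih (by positivity) NK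
    have e : ∀ n : ℤ, f NK (M+1) n = ∑ k ∈ Finset.range (NK+1), f NK M (n - k) :=
      f_succ NK M
    constructor
    · intro n
      rw [e, e]
      have := h.1 n
      simp only at this
      convert this using 3 <;> push_cast <;> ring
    · intro m n hmn hn
      rw [e, e]
      refine h.2 m n hmn ?_
      push_cast at hn ⊢
      linarith

/-- `f_M` has no nontrivial minimum (quasiconcavity on `ℤ`):
for `a ≤ n ≤ b`, `f_M(n) ≥ min(f_M(a), f_M(b))`. -/
theorem stmt6 (NK : ℕ) (hNK : 0 < NK) (M : ℕ) (hM : 1 ≤ M)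
    (a n b : ℤ) (han : a ≤ n) (hnb : n ≤ b) :
    min (f NK M a) (f NK M b) ≤ f NK M n := by
  have h := f_symUni NK M
  set s : ℤ := (M : ℤ) * NK with hs
  rcases le_or_gt (a + n) s with hle | hlt
  · exact le_trans (min_le_left _ _) (h.mono han hle)
  · calc min (f NK M a) (f NK M b) ≤ f NK M b := min_le_right _ _
      _ = f NK M (s - b) := (h.1 b).symm
      _ ≤ f NK M (s - n) := h.mono (by omega) (by omega)
      _ = f NK M n := h.1 n
end
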